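/- Let G be a split graph with split partition (C,I), π a partial order on V(G), and A = {u ∈ I : ∃v with (v ∈ C or |N(u)| < |N(v)|) and u ≺_π v}. There is an MCS ordering of G extending π if and only if (π, A) fulfills the nested property. -/

import Mathlib

open Finset

variable {V : Type*} {n : ℕ}

/-- The label of vertex `v` at step `i` of a label search along ordering `σ`:
the set of indices `j < i` such that `σ j` is adjacent to `v`. -/
def labelF (G : SimpleGraph V) [DecidableRel G.Adj] (σ : Fin n ≃ V)
    (i : Fin n) (v : V) : Finset (Fin n) :=
  Finset.univ.filter (fun j => j < i ∧ G.Adj (σ j) v)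

/-- Generic Search label order: `A ≺ B` iff `A = ∅` and `B ≠ ∅`. -/
def gsLt (A B : Finset (Fin n)) : Prop := A = ∅ ∧ B ≠ ∅

/-- BFS label order: `A ≺ B` iff (`A = ∅` and `B ≠ ∅`) or `min A > min B`. -/
def bfsLt (A B : Finset (Fin n)) : Prop := B.min < A.min

/-- LBFS label order: `A ≺ B` iff `A ⊊ B` or `min (A \ B) > min (B \ A)`. -/
def lbfsLt (A B : Finset (Fin n)) : Prop := (B \ A).min < (A \ B).min

/-- MCS label order: `A ≺ B` iff `|A| < |B|`. -/
def mcsLt (A B : Finset (Fin n)) : Prop := A.card < B.card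

/-- MNS label order: `A ≺ B` iff `A ⊊ B`. -/
def mnsLt (A B : Finset (Fin n)) : Prop := A ⊂ B

/-- `σ` is an ordering produced by the label search with label order `lt`:
at each step `i`, the chosen vertex `σ i` has a maximal label among unvisited vertices. -/
def IsSearchOrdering (lt : Finset (Fin n) → Finset (Fin n) → Prop)
    (G : SimpleGraph V) [DecidableRel G.Adj] (σ : Fin n ≃ V) : Prop :=
  ∀ i j : Fin n, i ≤ j → ¬ lt (labelF G σ i (σ i)) (labelF G σ i (σ j))

/-- `(π, A)` fulfills the nested property for the split graph `G` with clique `C`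
and independent set `I`: conditions (N1)–(N4). -/
def NestedProperty (G : SimpleGraph V) (C I : Set V) (π : V → V → Prop)
    (A : Set V) : Prop :=
  (∀ x y : V, π x y → x ≠ y → y ∈ C → x ∈ C ∪ A) ∧
  ∃ (k : ℕ) (Cs Is : Fin k → Set V),
    (∀ i, Cs i ⊆ C) ∧
    (∀ i j, i ≠ j → Disjoint (Cs i) (Cs j)) ∧
    (∀ i j, i ≠ j → Disjoint (Is i) (Is j)) ∧
    (∀ i j, Disjoint (Cs i) (Is j)) ∧
    (⋃ j, Is j) = A ∧
    (∀ i, ∀ x ∈ Is i, G.neighborSet x = ⋃ j ≤ i, Cs j) ∧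
    (∀ i, ∀ y ∈ Cs i ∪ Is i, ∀ x : V, π x y → x ≠ y → ∃ j ≤ i, x ∈ Cs j ∪ Is j) ∧
    (∀ i, ∀ x ∈ Is i, ∀ x' ∈ Is i,
      (∃ y ∈ Cs i, π x y ∧ x ≠ y) → (∃ y ∈ Cs i, π x' y ∧ x' ≠ y) → x = x')

set_option linter.unusedSectionVars false
set_option linter.unusedVariables false
open scoped Classical

section Aux

variable [Fintype V] (G : SimpleGraph V) [DecidableRel G.Adj]

noncomputable def vcnt (σ : Fin n ≃ V) (p : Fin n) (v : V) : ℕ :=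
  (univ.filter fun z => σ.symm z < p ∧ G.Adj z v).card

noncomputable def ccnt (C : Set V) (σ : Fin n ≃ V) (p : Fin n) : ℕ :=
  (univ.filter fun z => σ.symm z < p ∧ z ∈ C).card

lemma labelF_card (σ : Fin n ≃ V) (p : Fin n) (v : V) :
    (labelF G σ p v).card = vcnt G σ p v := by
  classical
  rw [vcnt]
  have : (univ.filter fun z => σ.symm z < p ∧ G.Adj z v) = (labelF G σ p v).image σ := by
    ext z
    simp only [mem_filter, mem_univ, true_and, mem_image, labelF]
    constructor
    · rintro ⟨h1, h2⟩
      exact ⟨σ.symm z, ⟨h1, by simpa using h2⟩, by simp⟩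
    · rintro ⟨j, ⟨hj1, hj2⟩, rfl⟩
      simpa using ⟨hj1, hj2⟩
  rw [this, Finset.card_image_of_injective _ σ.injective]

lemma mcs_le {σ : Fin n ≃ V} (hs : IsSearchOrdering mcsLt G σ) (p : Fin n) (v : V)
    (hp : p ≤ σ.symm v) : vcnt G σ p v ≤ vcnt G σ p (σ p) := by
  have := hs p (σ.symm v) hp
  rw [mcsLt, not_lt, labelF_card, labelF_card] at this
  simpa using this

variable {G}
variable {C I : Set V} {σ : Fin n ≃ V}

lemma adj_mem_C (hpart : ∀ v : V, (v ∈ C ∧ v ∉ I) ∨ (v ∈ I ∧ v ∉ C))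
    (hI : ∀ u ∈ I, ∀ v ∈ I, ¬ G.Adj u v) {u v : V} (hu : u ∈ I) (h : G.Adj u v) : v ∈ C := by
  rcases hpart v with ⟨h1, _⟩ | ⟨h1, _⟩
  · exact h1
  · exact absurd h (hI u hu v h1)

lemma lower1 (hC : G.IsClique C) {p : Fin n} {y : V} (hy : y ∈ C) (hp : p ≤ σ.symm y) :
    ccnt C σ p ≤ vcnt G σ p y := by
  apply card_le_card
  intro z hz
  simp only [mem_filter, mem_univ, true_and] at hz ⊢
  refine ⟨hz.1, hC hz.2 hy ?_⟩
  rintro rfl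
  exact absurd hp (not_le.2 hz.1)

lemma lower2 (hC : G.IsClique C)
    (hpart : ∀ v : V, (v ∈ C ∧ v ∉ I) ∨ (v ∈ I ∧ v ∉ C))
    {p : Fin n} {y a : V} (hy : y ∈ C) (hp : p ≤ σ.symm y)
    (ha : a ∈ I) (hap : σ.symm a < p) (hadj : G.Adj a y) :
    ccnt C σ p + 1 ≤ vcnt G σ p y := by
  have hanC : a ∉ C := by
    rcases hpart a with ⟨_, h2⟩ | ⟨_, h2⟩
    · exact absurd ha h2
    · exact h2
  have hsub : insert a (univ.filter fun z => σ.symm z < p ∧ z ∈ C)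
      ⊆ univ.filter fun z => σ.symm z < p ∧ G.Adj z y := by
    intro z hz
    rcases Finset.mem_insert.1 hz with rfl | hz
    · simp only [mem_filter, mem_univ, true_and]
      exact ⟨hap, hadj⟩
    · simp only [mem_filter, mem_univ, true_and] at hz ⊢
      refine ⟨hz.1, hC hz.2 hy ?_⟩
      rintro rfl
      exact absurd hp (not_le.2 hz.1)
  have := card_le_card hsub
  rwa [Finset.card_insert_of_notMem (by simp only [mem_filter]; tauto)] at this

lemma upper_I (hpart : ∀ v : V, (v ∈ C ∧ v ∉ I) ∨ (v ∈ I ∧ v ∉ C))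
    (hI : ∀ u ∈ I, ∀ v ∈ I, ¬ G.Adj u v) {p : Fin n} {a : V} (ha : a ∈ I) :
    vcnt G σ p a ≤ ccnt C σ p := by
  apply card_le_card
  intro z hz
  simp only [mem_filter, mem_univ, true_and] at hz ⊢
  exact ⟨hz.1, adj_mem_C hpart hI ha hz.2.symm⟩

lemma vcnt_le_deg {p : Fin n} {a : V} : vcnt G σ p a ≤ (G.neighborFinset a).card := by
  apply card_le_card
  intro z hz
  simp only [mem_filter, mem_univ, true_and, SimpleGraph.mem_neighborFinset] at hz ⊢
  exact hz.2.symm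

/-- GS2 : when an `I`-vertex is chosen, every previously visited `I`-vertex has all
its neighbors visited. -/
lemma gs2 (hC : G.IsClique C)
    (hpart : ∀ v : V, (v ∈ C ∧ v ∉ I) ∨ (v ∈ I ∧ v ∉ C))
    (hI : ∀ u ∈ I, ∀ v ∈ I, ¬ G.Adj u v)
    (hM : ∀ (p : Fin n) (v : V), p ≤ σ.symm v → vcnt G σ p v ≤ vcnt G σ p (σ p))
    {p : Fin n} (hp : σ p ∈ I) {u : V} (hu : u ∈ I) (hupos : σ.symm u < p)
    {c : V} (hadj : G.Adj u c) : σ.symm c < p := by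
  by_contra hcp
  rw [not_lt] at hcp
  have hcC : c ∈ C := adj_mem_C hpart hI hu hadj
  have h1 := lower2 (σ := σ) hC hpart hcC hcp hu hupos hadj
  have h2 : vcnt G σ p (σ p) ≤ ccnt C σ p := upper_I hpart hI hp
  have h3 := hM p c hcp
  omega

/-- GS1 : when a vertex of `A` is chosen, all previously visited clique vertices
are its neighbors. -/
lemma gs1 (hC : G.IsClique C)
    (hpart : ∀ v : V, (v ∈ C ∧ v ∉ I) ∨ (v ∈ I ∧ v ∉ C))
    (hI : ∀ u ∈ I, ∀ v ∈ I, ¬ G.Adj u v)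
    (hM : ∀ (p : Fin n) (v : V), p ≤ σ.symm v → vcnt G σ p v ≤ vcnt G σ p (σ p))
    {a : V} (ha : a ∈ I)
    (hw : ∃ w, (w ∈ C ∨ (G.neighborFinset a).card < (G.neighborFinset w).card) ∧
      σ.symm a < σ.symm w)
    {z : V} (hz : z ∈ C) (hzpos : σ.symm z < σ.symm a) : G.Adj z a := by
  by_contra hnadj
  set p := σ.symm a with hpdef
  have hσp : σ p = a := by simp [hpdef]
  have h1 : vcnt G σ p a < ccnt C σ p := by
    have hzmem : z ∈ univ.filter fun w => σ.symm w < p ∧ w ∈ C := by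
      simp only [mem_filter, mem_univ, true_and]; exact ⟨hzpos, hz⟩
    have hsub : (univ.filter fun w => σ.symm w < p ∧ G.Adj w a)
        ⊆ (univ.filter fun w => σ.symm w < p ∧ w ∈ C).erase z := by
      intro w hw'
      simp only [mem_filter, mem_univ, true_and] at hw'
      have hwC : w ∈ C := adj_mem_C hpart hI ha hw'.2.symm
      rw [Finset.mem_erase]
      constructor
      · rintro rfl; exact hnadj hw'.2
      · simp only [mem_filter, mem_univ, true_and]; exact ⟨hw'.1, hwC⟩
    have hle := card_le_card hsub
    have hlt := Finset.card_erase_lt_of_mem hzmem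
    rw [vcnt, ccnt]
    omega
  rcases hw with ⟨w, hw1, hw2⟩
  rcases hw1 with hwC | hwdeg
  · have := lower1 (σ := σ) hC hwC hw2.le
    have := hM p w hw2.le
    rw [hσp] at this
    omega
  · by_cases hex : ∃ y ∈ C, p ≤ σ.symm y
    · rcases hex with ⟨y, hy1, hy2⟩
      have := lower1 (σ := σ) hC hy1 hy2
      have := hM p y hy2
      rw [hσp] at this
      omega
    · push_neg at hex
      have hwI : w ∈ I := by
        rcases hpart w with ⟨h1', _⟩ | ⟨h1', _⟩
        · exact absurd (hex w h1') (not_lt.2 hw2.le)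
        · exact h1'
      have hfull : vcnt G σ p w = (G.neighborFinset w).card := by
        apply le_antisymm vcnt_le_deg
        apply card_le_card
        intro y hy
        rw [SimpleGraph.mem_neighborFinset] at hy
        simp only [mem_filter, mem_univ, true_and]
        exact ⟨hex y (adj_mem_C hpart hI hwI hy), hy.symm⟩
      have h4 := hM p w hw2.le
      rw [hσp] at h4
      have h5 : vcnt G σ p a ≤ (G.neighborFinset a).card := vcnt_le_deg
      omega

/-- C1' : if `a ∈ A`, `y` is a neighbor of `a`, and `x ∈ C` comes before `y`,
then `x` is a neighbor of `a`. -/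
lemma c1 (hC : G.IsClique C)
    (hpart : ∀ v : V, (v ∈ C ∧ v ∉ I) ∨ (v ∈ I ∧ v ∉ C))
    (hI : ∀ u ∈ I, ∀ v ∈ I, ¬ G.Adj u v)
    (hM : ∀ (p : Fin n) (v : V), p ≤ σ.symm v → vcnt G σ p v ≤ vcnt G σ p (σ p))
    {a x y : V} (ha : a ∈ I)
    (hw : ∃ w, (w ∈ C ∨ (G.neighborFinset a).card < (G.neighborFinset w).card) ∧
      σ.symm a < σ.symm w)
    (hx : x ∈ C) (hxy : σ.symm x < σ.symm y) (hay : G.Adj a y) : G.Adj a x := by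
  by_contra hnadj
  have hyC : y ∈ C := adj_mem_C hpart hI ha hay
  have hax : σ.symm a < σ.symm x := by
    rcases lt_trichotomy (σ.symm x) (σ.symm a) with h | h | h
    · exact absurd ((gs1 hC hpart hI hM ha hw hx h).symm) hnadj
    · exfalso
      have : x = a := σ.symm.injective (Fin.ext (by omega))
      rcases hpart a with ⟨_, h2⟩ | ⟨_, h2⟩
      · exact absurd ha h2
      · exact h2 (this ▸ hx)
    · exact h
  set p := σ.symm x with hpdef
  have hσp : σ p = x := by simp [hpdef]
  have h1 : vcnt G σ p x ≤ ccnt C σ p := by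
    apply card_le_card
    intro z hz
    simp only [mem_filter, mem_univ, true_and] at hz ⊢
    refine ⟨hz.1, ?_⟩
    rcases hpart z with ⟨h2, _⟩ | ⟨h2, _⟩
    · exact h2
    · exfalso
      rcases lt_trichotomy (σ.symm z) (σ.symm a) with h3 | h3 | h3
      · have hqa : σ (σ.symm a) = a := by simp
        have := gs2 hC hpart hI hM (by rw [hqa]; exact ha) h2 h3 hz.2
        omega
      · have : z = a := σ.symm.injective (Fin.ext (by omega))
        exact hnadj (this ▸ hz.2)
      · have hqz : σ (σ.symm z) = z := by simp
        have := gs2 hC hpart hI hM (p := σ.symm z) (by rw [hqz]; exact h2) ha h3 hay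
        have hzp : σ.symm z < p := hz.1
        rw [hpdef] at hzp
        omega
  have h2 := lower2 (σ := σ) hC hpart hyC hxy.le ha hax hay
  have h3 := hM p y hxy.le
  rw [hσp] at h3
  omega

/-- nestedness of neighborhoods of `A`-vertices along the ordering -/
lemma nest (hC : G.IsClique C)
    (hpart : ∀ v : V, (v ∈ C ∧ v ∉ I) ∨ (v ∈ I ∧ v ∉ C))
    (hI : ∀ u ∈ I, ∀ v ∈ I, ¬ G.Adj u v)
    (hM : ∀ (p : Fin n) (v : V), p ≤ σ.symm v → vcnt G σ p v ≤ vcnt G σ p (σ p))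
    {a a' : V} (ha : a ∈ I) (ha' : a' ∈ I)
    (hw' : ∃ w, (w ∈ C ∨ (G.neighborFinset a').card < (G.neighborFinset w).card) ∧
      σ.symm a' < σ.symm w)
    (hpos : σ.symm a < σ.symm a') :
    G.neighborFinset a ⊆ G.neighborFinset a' := by
  intro c hc
  rw [SimpleGraph.mem_neighborFinset] at hc ⊢
  have hq : σ (σ.symm a') = a' := by simp
  have h1 : σ.symm c < σ.symm a' :=
    gs2 hC hpart hI hM (p := σ.symm a') (by rw [hq]; exact ha') ha hpos hc
  have hcC : c ∈ C := adj_mem_C hpart hI ha hc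
  exact (gs1 hC hpart hI hM ha' hw' hcC h1).symm

lemma forward_nested (G : SimpleGraph V) [Fintype V] [DecidableRel G.Adj]
    (C I : Set V) (hpart : ∀ v : V, (v ∈ C ∧ v ∉ I) ∨ (v ∈ I ∧ v ∉ C))
    (hC : G.IsClique C) (hI : ∀ u ∈ I, ∀ v ∈ I, ¬ G.Adj u v)
    (π : V → V → Prop) (hπ : IsPartialOrder V π)
    (A : Set V)
    (hA : A = {u | u ∈ I ∧ ∃ v : V,
      (v ∈ C ∨ (G.neighborFinset u).card < (G.neighborFinset v).card) ∧
      π u v ∧ u ≠ v})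
    (σ : Fin (Fintype.card V) ≃ V) (hs : IsSearchOrdering mcsLt G σ)
    (hext : ∀ u v : V, π u v → u ≠ v → σ.symm u < σ.symm v) :
    NestedProperty G C I π A := by
  have hM := mcs_le G hs
  have htrans : ∀ {x y z : V}, π x y → π y z → π x z :=
    fun h1 h2 => hπ.toIsPreorder.toIsTrans.trans _ _ _ h1 h2
  have hanti : ∀ {x y : V}, π x y → π y x → x = y :=
    fun h1 h2 => hπ.toAntisymm.antisymm _ _ h1 h2
  set deg : V → ℕ := fun v => (G.neighborFinset v).card with hdeg
  have hAiff : ∀ u, u ∈ A ↔ u ∈ I ∧ ∃ v, (v ∈ C ∨ deg u < deg v) ∧ π u v ∧ u ≠ v := by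
    intro u; rw [hA]; rfl
  have hAI : ∀ a ∈ A, a ∈ I := fun a ha => ((hAiff a).1 ha).1
  have hwit : ∀ a ∈ A, ∃ w, (w ∈ C ∨ deg a < deg w) ∧ σ.symm a < σ.symm w := by
    intro a ha
    obtain ⟨_, v, h1, h2, h3⟩ := (hAiff a).1 ha
    exact ⟨v, h1, hext a v h2 h3⟩
  have hnest2 : ∀ a ∈ A, ∀ a' ∈ A, σ.symm a ≤ σ.symm a' →
      G.neighborFinset a ⊆ G.neighborFinset a' := by
    intro a ha a' ha' hle
    rcases eq_or_lt_of_le hle with heq | hlt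
    · have : a = a' := σ.symm.injective (Fin.ext (by omega))
      rw [this]
    · exact nest hC hpart hI hM (hAI a ha) (hAI a' ha') (hwit a' ha') hlt
  have hdeg_mono : ∀ a ∈ A, ∀ a' ∈ A, deg a ≤ deg a' →
      G.neighborFinset a ⊆ G.neighborFinset a' := by
    intro a ha a' ha' hle
    rcases le_total (σ.symm a) (σ.symm a') with h | h
    · exact hnest2 a ha a' ha' h
    · have hsub := hnest2 a' ha' a ha h
      rw [Finset.eq_of_subset_of_card_le hsub hle]
  -- the blocks
  set k : ℕ := Fintype.card V + 1 with hk
  set NN : ℕ → Finset V := fun m => univ.filter (fun v => ∃ a ∈ A, deg a = m ∧ G.Adj a v)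
    with hNN
  have hmemNN : ∀ m v, v ∈ NN m ↔ ∃ a ∈ A, deg a = m ∧ G.Adj a v := by
    intro m v; simp [hNN]
  have hNNeq : ∀ a ∈ A, NN (deg a) = G.neighborFinset a := by
    intro a ha
    ext v
    rw [hmemNN, SimpleGraph.mem_neighborFinset]
    constructor
    · rintro ⟨a', ha', hd, hadj⟩
      have h1 : G.neighborFinset a' ⊆ G.neighborFinset a := hdeg_mono a' ha' a ha (le_of_eq hd)
      have := h1 (by rwa [SimpleGraph.mem_neighborFinset])
      rwa [SimpleGraph.mem_neighborFinset] at this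
    · intro hadj
      exact ⟨a, ha, rfl, hadj⟩
  have hNNC : ∀ m v, v ∈ NN m → v ∈ C := by
    intro m v hv
    obtain ⟨a, ha, _, hadj⟩ := (hmemNN m v).1 hv
    exact adj_mem_C hpart hI (hAI a ha) hadj
  have hNNmono : ∀ m m', m ≤ m' → (∃ a' ∈ A, deg a' = m') → NN m ⊆ NN m' := by
    intro m m' hle ⟨a', ha', hd'⟩ v hv
    obtain ⟨a, ha, hd, hadj⟩ := (hmemNN m v).1 hv
    rw [hmemNN]
    refine ⟨a', ha', hd', ?_⟩
    have h1 : G.neighborFinset a ⊆ G.neighborFinset a' :=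
      hdeg_mono a ha a' ha' (by omega)
    have := h1 (by rwa [SimpleGraph.mem_neighborFinset])
    rwa [SimpleGraph.mem_neighborFinset] at this
  set Cs : Fin k → Set V := fun i => {v | v ∈ NN (i : ℕ) ∧ ∀ j < (i : ℕ), v ∉ NN j}
    with hCs
  set Is : Fin k → Set V := fun i => {a | a ∈ A ∧ deg a = (i : ℕ)} with hIs
  have hdegk : ∀ v : V, deg v < k := by
    intro v
    have h1 := Finset.card_le_univ (G.neighborFinset v)
    have h2 : deg v = (G.neighborFinset v).card := rfl
    omega
  have mem_cup : ∀ (i : Fin k) (v : V), v ∈ NN (i : ℕ) → ∃ j, j ≤ i ∧ v ∈ Cs j := by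
    intro i v hv
    have hex : ∃ m, v ∈ NN m := ⟨(i : ℕ), hv⟩
    have hle : Nat.find hex ≤ (i : ℕ) := Nat.find_min' hex hv
    refine ⟨⟨Nat.find hex, by omega⟩, ?_, ?_⟩
    · rw [Fin.le_def]; exact hle
    · exact ⟨Nat.find_spec hex, fun l hl => Nat.find_min hex hl⟩
  constructor
  · -- N1
    intro x y hxy hne hyC
    rcases hpart x with ⟨h1, _⟩ | ⟨h1, _⟩
    · exact Or.inl h1
    · exact Or.inr ((hAiff x).2 ⟨h1, y, Or.inl hyC, hxy, hne⟩)
  refine ⟨k, Cs, Is, ?_, ?_, ?_, ?_, ?_, ?_, ?_, ?_⟩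
  · -- Cs i ⊆ C
    intro i v hv
    exact hNNC _ v hv.1
  · -- Cs disjoint
    intro i j hij
    rw [Set.disjoint_left]
    intro v hvi hvj
    have hij' : (i : ℕ) ≠ (j : ℕ) := fun h => hij (Fin.ext h)
    rcases Nat.lt_or_ge (i : ℕ) (j : ℕ) with h | h
    · exact hvj.2 _ h hvi.1
    · exact hvi.2 _ (by omega) hvj.1
  · -- Is disjoint
    intro i j hij
    rw [Set.disjoint_left]
    intro a hai haj
    exact hij (Fin.ext (hai.2 ▸ haj.2))
  · -- Cs/Is disjoint
    intro i j
    rw [Set.disjoint_left]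
    intro v hvi hvj
    have h1 : v ∈ C := hNNC _ v hvi.1
    have h2 : v ∈ I := hAI v hvj.1
    rcases hpart v with ⟨_, h⟩ | ⟨_, h⟩
    · exact h h2
    · exact h h1
  · -- ⋃ Is = A
    ext a
    simp only [Set.mem_iUnion, hIs, Set.mem_setOf_eq]
    constructor
    · rintro ⟨i, ha, _⟩; exact ha
    · intro ha
      exact ⟨⟨deg a, hdegk a⟩, ha, rfl⟩
  · -- N2
    intro i x hx
    obtain ⟨hxA, hxdeg⟩ := hx
    ext v
    simp only [SimpleGraph.mem_neighborSet, Set.mem_iUnion]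
    constructor
    · intro hadj
      have hv : v ∈ NN (i : ℕ) := by
        rw [← hxdeg, hNNeq x hxA, SimpleGraph.mem_neighborFinset]
        exact hadj
      obtain ⟨j, hj, hcs⟩ := mem_cup i v hv
      exact ⟨j, hj, hcs⟩
    · rintro ⟨j, hj, hcs⟩
      have hvNj : v ∈ NN (j : ℕ) := hcs.1
      have hvNi : v ∈ NN (i : ℕ) :=
        hNNmono _ _ (by rw [Fin.le_def] at hj; exact hj) ⟨x, hxA, hxdeg⟩ hvNj
      rw [← hxdeg, hNNeq x hxA, SimpleGraph.mem_neighborFinset] at hvNi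
      exact hvNi
  · -- N3
    intro i y hy x hxy hne
    have hpos := hext x y hxy hne
    rcases hy with hyCs | hyIs
    · -- y ∈ Cs i
      obtain ⟨a, haA, hadeg, haadj⟩ := (hmemNN _ y).1 hyCs.1
      have hyC : y ∈ C := hNNC _ y hyCs.1
      rcases hpart x with ⟨hxC, _⟩ | ⟨hxI, _⟩
      · have hax : G.Adj a x := c1 hC hpart hI hM (hAI a haA) (hwit a haA) hxC hpos haadj
        have hxNN : x ∈ NN (i : ℕ) := by
          rw [hmemNN]; exact ⟨a, haA, hadeg, hax⟩
        obtain ⟨j, hj, hcs⟩ := mem_cup i x hxNN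
        exact ⟨j, hj, Or.inl hcs⟩
      · have hxA : x ∈ A := (hAiff x).2 ⟨hxI, y, Or.inl hyC, hxy, hne⟩
        have hdle : deg x ≤ (i : ℕ) := by
          rcases lt_trichotomy (σ.symm x) (σ.symm a) with h | h | h
          · have h3 := Finset.card_le_card
              (nest hC hpart hI hM hxI (hAI a haA) (hwit a haA) h)
            have e1 : deg x = (G.neighborFinset x).card := rfl
            have e2 : deg a = (G.neighborFinset a).card := rfl
            omega
          · have : x = a := σ.symm.injective (Fin.ext (by omega))
            rw [this]; omega
          · exfalso
            have hq : σ (σ.symm x) = x := by simp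
            have := gs2 hC hpart hI hM (p := σ.symm x) (by rw [hq]; exact hxI)
              (hAI a haA) h haadj
            omega
        refine ⟨⟨deg x, hdegk x⟩, ?_, Or.inr ⟨hxA, rfl⟩⟩
        rw [Fin.le_def]; exact hdle
    · -- y ∈ Is i
      obtain ⟨hyA, hydeg⟩ := hyIs
      rcases hpart x with ⟨hxC, _⟩ | ⟨hxI, _⟩
      · have hadjxy : G.Adj x y := gs1 hC hpart hI hM (hAI y hyA) (hwit y hyA) hxC hpos
        have hxNN : x ∈ NN (i : ℕ) := by
          rw [hmemNN]
          exact ⟨y, hyA, hydeg, hadjxy.symm⟩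
        obtain ⟨j, hj, hcs⟩ := mem_cup i x hxNN
        exact ⟨j, hj, Or.inl hcs⟩
      · have hsub : G.neighborFinset x ⊆ G.neighborFinset y :=
          nest hC hpart hI hM hxI (hAI y hyA) (hwit y hyA) hpos
        have hdle : deg x ≤ deg y := Finset.card_le_card hsub
        obtain ⟨_, w, hw1, hw2, hw3⟩ := (hAiff y).1 hyA
        have hxw : x ≠ w := by
          rintro rfl
          exact hne (hanti hxy hw2)
        have hxA : x ∈ A := by
          refine (hAiff x).2 ⟨hxI, w, ?_, htrans hxy hw2, hxw⟩
          rcases hw1 with h | h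
          · exact Or.inl h
          · exact Or.inr (by omega)
        refine ⟨⟨deg x, hdegk x⟩, ?_, Or.inr ⟨hxA, rfl⟩⟩
        rw [Fin.le_def]
        simp only [hydeg] at hdle
        exact hdle
  · -- N4
    intro i x hx x' hx' h1 h2
    have main : ∀ b b' : V, b ∈ A → b' ∈ A → deg b = (i : ℕ) →
        (∃ y ∈ Cs i, π b' y ∧ b' ≠ y) → σ.symm b < σ.symm b' → False := by
      rintro b b' hb hb' hdb ⟨y', hy', hπ', hne'⟩ hposb
      have hy'N : y' ∈ NN (i : ℕ) := hy'.1
      have hadj : G.Adj b y' := by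
        have : y' ∈ NN (deg b) := by rw [hdb]; exact hy'N
        rw [hNNeq b hb, SimpleGraph.mem_neighborFinset] at this
        exact this
      have hq : σ (σ.symm b') = b' := by simp
      have := gs2 hC hpart hI hM (p := σ.symm b') (by rw [hq]; exact hAI b' hb')
        (hAI b hb) hposb hadj
      have := hext b' y' hπ' hne'
      omega
    rcases lt_trichotomy (σ.symm x) (σ.symm x') with h | h | h
    · exact absurd (main x x' hx.1 hx'.1 hx.2 h2 h) id
    · exact σ.symm.injective (Fin.ext (by omega))
    · exact absurd (main x' x hx'.1 hx.1 hx'.2 h1 h) id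

lemma rank_lt_rank [Fintype V] (s : V → V → Prop) (hsl : IsLinearOrder V s)
    {u v : V} (h : s u v) (hne : u ≠ v) :
    (univ.filter fun w => s w u ∧ w ≠ u).card < (univ.filter fun w => s w v ∧ w ≠ v).card := by
  have htr : ∀ {a b c : V}, s a b → s b c → s a c :=
    fun h1 h2 => hsl.toIsPartialOrder.toIsPreorder.toIsTrans.trans _ _ _ h1 h2
  have has : ∀ {a b : V}, s a b → s b a → a = b :=
    fun h1 h2 => hsl.toIsPartialOrder.toAntisymm.antisymm _ _ h1 h2
  have hsub : insert u (univ.filter fun w => s w u ∧ w ≠ u)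
      ⊆ univ.filter fun w => s w v ∧ w ≠ v := by
    intro w hw
    rcases Finset.mem_insert.1 hw with rfl | hw
    · simp only [mem_filter, mem_univ, true_and]
      exact ⟨h, hne⟩
    · simp only [mem_filter, mem_univ, true_and] at hw ⊢
      refine ⟨htr hw.1 h, ?_⟩
      rintro rfl
      exact hne (has h hw.1)
  have h2 := card_le_card hsub
  rwa [Finset.card_insert_of_notMem (by simp)] at h2

lemma keyN {x y r r2 N : ℕ} (hr : r < N + 1) (h : x < y ∨ (x = y ∧ r < r2)) :
    x * (N + 1) + r < y * (N + 1) + r2 := by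
  rcases h with h | ⟨rfl, h⟩
  · have h1 : x + 1 ≤ y := h
    have h2 : (x + 1) * (N + 1) ≤ y * (N + 1) := Nat.mul_le_mul_right _ h1
    have h3 : x * (N + 1) + r < (x + 1) * (N + 1) := by
      rw [Nat.succ_mul]; omega
    omega
  · omega

lemma backward_exists (G : SimpleGraph V) [Fintype V] [DecidableRel G.Adj]
    (C I : Set V) (hpart : ∀ v : V, (v ∈ C ∧ v ∉ I) ∨ (v ∈ I ∧ v ∉ C))
    (hC : G.IsClique C) (hI : ∀ u ∈ I, ∀ v ∈ I, ¬ G.Adj u v)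
    (π : V → V → Prop) (hπ : IsPartialOrder V π)
    (A : Set V)
    (hA : A = {u | u ∈ I ∧ ∃ v : V,
      (v ∈ C ∨ (G.neighborFinset u).card < (G.neighborFinset v).card) ∧
      π u v ∧ u ≠ v})
    (hN : NestedProperty G C I π A) :
    ∃ σ : Fin (Fintype.card V) ≃ V, IsSearchOrdering mcsLt G σ ∧
      ∀ u v : V, π u v → u ≠ v → σ.symm u < σ.symm v := by
  classical
  obtain ⟨hN1, k, Cs, Is, hCsC, hCsD, hIsD, hCID, hUA, hNbr, hN3, hN4⟩ := hN
  obtain ⟨s, hsl, hπs⟩ := @extend_partialOrder V π hπ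
  have htrans : ∀ {x y z : V}, π x y → π y z → π x z :=
    fun h1 h2 => hπ.toIsPreorder.toIsTrans.trans _ _ _ h1 h2
  set n : ℕ := Fintype.card V with hn
  set deg : V → ℕ := fun v => (G.neighborFinset v).card with hdeg
  have hdeg_le_n : ∀ v, deg v ≤ n := fun v => Finset.card_le_univ _
  have hAI : ∀ a ∈ A, a ∈ I := by
    intro a ha; rw [hA] at ha; exact ha.1
  have hIsA : ∀ (i : Fin k), ∀ a ∈ Is i, a ∈ A := by
    intro i a ha; rw [← hUA]; exact Set.mem_iUnion.2 ⟨i, ha⟩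
  have hCnA : ∀ v ∈ C, v ∉ A := by
    intro v hv hva
    rcases hpart v with ⟨_, h⟩ | ⟨_, h⟩
    · exact h (hAI v hva)
    · exact h hv
  have hInA : ∀ v ∈ I, v ∈ A → ∃ i, v ∈ Is i := by
    intro v _ hva
    rw [← hUA] at hva
    exact Set.mem_iUnion.1 hva
  -- rank from a linear extension
  set rank : V → ℕ := fun v => (univ.filter fun w => s w v ∧ w ≠ v).card with hrankdef
  have hrk : ∀ {u v : V}, π u v → u ≠ v → rank u < rank v :=
    fun h hne => rank_lt_rank s hsl (hπs _ _ h) hne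
  have hrank_ne : ∀ {u v : V}, u ≠ v → rank u ≠ rank v := by
    intro u v hne
    rcases hsl.toTotal.total u v with h | h
    · exact ne_of_lt (rank_lt_rank s hsl h hne)
    · exact ne_of_gt (rank_lt_rank s hsl h hne.symm)
  have hrankn : ∀ v, rank v < n + 1 := by
    intro v
    have h1 : rank v ≤ (univ : Finset V).card := Finset.card_filter_le _ _
    have h2 : (univ : Finset V).card = n := Finset.card_univ
    omega
  -- block, sub, key
  set special : V → Prop := fun v => ∃ i, v ∈ Is i ∧ ∃ y ∈ Cs i, π v y ∧ v ≠ y with hspecialdef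
  have hspecA : ∀ v, special v → v ∈ A := by
    rintro v ⟨i, hv, _⟩; exact hIsA i v hv
  set sub : V → ℕ := fun v => if special v then 0 else if v ∈ A then 1 else 0 with hsubdef
  have hsub_le : ∀ v, sub v ≤ 1 := by
    intro v
    show (if special v then 0 else if v ∈ A then 1 else 0) ≤ 1
    split_ifs <;> omega
  have hsub_spec : ∀ v, special v → sub v = 0 := by
    intro v h
    show (if special v then 0 else if v ∈ A then 1 else 0) = 0
    rw [if_pos h]
  have hsub_notA : ∀ v, v ∉ A → sub v = 0 := by
    intro v h
    show (if special v then 0 else if v ∈ A then 1 else 0) = 0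
    rw [if_neg (fun hs => h (hspecA v hs)), if_neg h]
  have hsub_nonspec_A : ∀ v, v ∈ A → ¬ special v → sub v = 1 := by
    intro v hv h
    show (if special v then 0 else if v ∈ A then 1 else 0) = 1
    rw [if_neg h, if_pos hv]
  set block : V → ℕ := fun v =>
    if h : ∃ i : Fin k, v ∈ Cs i ∪ Is i then ((Classical.choose h : Fin k) : ℕ)
    else if v ∈ C then k else k + 1 + (n - deg v) with hblockdef
  have hblock_mem : ∀ (i : Fin k) (v : V), v ∈ Cs i ∪ Is i → block v = i := by
    intro i v hv
    have hex : ∃ i : Fin k, v ∈ Cs i ∪ Is i := ⟨i, hv⟩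
    have hspec := Classical.choose_spec hex
    have heq : Classical.choose hex = i := by
      by_contra hne
      rcases hspec with h1 | h1
      · rcases hv with h2 | h2
        · exact Set.disjoint_left.1 (hCsD _ _ hne) h1 h2
        · exact Set.disjoint_left.1 (hCID _ _) h1 h2
      · rcases hv with h2 | h2
        · exact Set.disjoint_left.1 (hCID _ _) h2 h1
        · exact Set.disjoint_left.1 (hIsD _ _ hne) h1 h2
    show (if h : ∃ i : Fin k, v ∈ Cs i ∪ Is i then ((Classical.choose h : Fin k) : ℕ)
      else if v ∈ C then k else k + 1 + (n - deg v)) = i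
    rw [dif_pos hex, heq]
  have hblock_CnotCs : ∀ v ∈ C, (∀ i, v ∉ Cs i) → block v = k := by
    intro v hv hv2
    have hnex : ¬ ∃ i : Fin k, v ∈ Cs i ∪ Is i := by
      rintro ⟨i, h | h⟩
      · exact hv2 i h
      · rcases hpart v with ⟨_, h2⟩ | ⟨_, h2⟩
        · exact h2 (hAI v (hIsA i v h))
        · exact h2 hv
    show (if h : ∃ i : Fin k, v ∈ Cs i ∪ Is i then ((Classical.choose h : Fin k) : ℕ)
      else if v ∈ C then k else k + 1 + (n - deg v)) = k
    rw [dif_neg hnex, if_pos hv]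
  have hblock_InotA : ∀ v ∈ I, v ∉ A → block v = k + 1 + (n - deg v) := by
    intro v hv hv2
    have hvnC : v ∉ C := by
      rcases hpart v with ⟨_, h2⟩ | ⟨_, h2⟩
      · exact absurd hv h2
      · exact h2
    have hnex : ¬ ∃ i : Fin k, v ∈ Cs i ∪ Is i := by
      rintro ⟨i, h | h⟩
      · exact hvnC (hCsC i h)
      · exact hv2 (hIsA i v h)
    show (if h : ∃ i : Fin k, v ∈ Cs i ∪ Is i then ((Classical.choose h : Fin k) : ℕ)
      else if v ∈ C then k else k + 1 + (n - deg v)) = k + 1 + (n - deg v)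
    rw [dif_neg hnex, if_neg hvnC]
  set key : V → ℕ := fun v => (block v * 2 + sub v) * (n + 1) + rank v with hkeydef
  have hkey_blt : ∀ {z w : V}, block z < block w → key z < key w := by
    intro z w h
    have h1 := hsub_le z
    have h2 := hsub_le w
    exact keyN (hrankn z) (Or.inl (by omega))
  have hkey_sub : ∀ {z w : V}, block z = block w → sub z < sub w → key z < key w := by
    intro z w h h2
    exact keyN (hrankn z) (Or.inl (by omega))
  have hkey_rank : ∀ {z w : V}, block z = block w → sub z = sub w → rank z < rank w →
      key z < key w := by
    intro z w h1 h2 h3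
    exact keyN (hrankn z) (Or.inr ⟨by omega, h3⟩)
  have hbs : ∀ {z w : V}, key z < key w → block z < block w ∨
      (block z = block w ∧ (sub z < sub w ∨ (sub z = sub w ∧ rank z < rank w))) := by
    intro z w hlt
    rcases lt_trichotomy (block z * 2 + sub z) (block w * 2 + sub w) with h | h | h
    · have h1 := hsub_le z
      have h2 := hsub_le w
      rcases lt_trichotomy (block z) (block w) with h3 | h3 | h3
      · exact Or.inl h3
      · exact Or.inr ⟨h3, Or.inl (by omega)⟩
      · omega
    · have h1 : (block z * 2 + sub z) * (n + 1) + rank z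
          < (block w * 2 + sub w) * (n + 1) + rank w := hlt
      rw [h] at h1
      have h2 := hsub_le z
      have h3 := hsub_le w
      refine Or.inr ⟨by omega, Or.inr ⟨by omega, by omega⟩⟩
    · have h0 : key w < key z := keyN (hrankn w) (Or.inl h)
      omega
  have hkey_block_le : ∀ {z w : V}, key z ≤ key w → block z ≤ block w := by
    intro z w h
    by_contra h2
    rw [not_le] at h2
    have := hkey_blt h2
    omega
  have hkey_inj : Function.Injective key := by
    intro u v h
    by_contra hne
    have h1 : rank u ≠ rank v := hrank_ne hne
    rcases lt_trichotomy (block u * 2 + sub u) (block v * 2 + sub v) with hx | hx | hx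
    · have h0 : key u < key v := keyN (hrankn u) (Or.inl hx)
      omega
    · have h2 : (block u * 2 + sub u) * (n + 1) + rank u
          = (block v * 2 + sub v) * (n + 1) + rank v := h
      rw [hx] at h2
      omega
    · have h0 : key v < key u := keyN (hrankn v) (Or.inl hx)
      omega
  -- the extension property at key level
  have hE : ∀ u v : V, π u v → u ≠ v → key u < key v := by
    intro u v huv hne
    have hrltuv : rank u < rank v := hrk huv hne
    have crit : block u < block v ∨ (block u = block v ∧ sub u ≤ sub v) → key u < key v := by
      rintro (h | ⟨h1, h2⟩)
      · exact hkey_blt h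
      · rcases Nat.lt_or_ge (sub u) (sub v) with h3 | h3
        · exact hkey_sub h1 h3
        · exact hkey_rank h1 (by omega) hrltuv
    apply crit
    rcases hpart v with ⟨hvC, hvI⟩ | ⟨hvI, hvC⟩
    · by_cases hvCs : ∃ i, v ∈ Cs i
      · obtain ⟨i, hvcs⟩ := hvCs
        have hbv : block v = i := hblock_mem i v (Or.inl hvcs)
        obtain ⟨j, hji, hu⟩ := hN3 i v (Or.inl hvcs) u huv hne
        have hbu : block u = j := hblock_mem j u hu
        rcases eq_or_lt_of_le hji with rfl | hlt
        · right
          refine ⟨by rw [hbu, hbv], ?_⟩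
          have hsu : sub u = 0 := by
            rcases hu with h | h
            · exact hsub_notA u (hCnA u (hCsC j h))
            · exact hsub_spec u ⟨j, h, v, hvcs, huv, hne⟩
          omega
        · left; rw [hbu, hbv]; exact hlt
      · push_neg at hvCs
        have hbv : block v = k := hblock_CnotCs v hvC hvCs
        rcases hN1 u v huv hne hvC with huC | huA
        · by_cases huCs : ∃ i, u ∈ Cs i
          · obtain ⟨i, hucs⟩ := huCs
            left; rw [hblock_mem i u (Or.inl hucs), hbv]; exact i.isLt
          · push_neg at huCs
            right
            refine ⟨by rw [hblock_CnotCs u huC huCs, hbv], ?_⟩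
            rw [hsub_notA u (hCnA u huC), hsub_notA v (hCnA v hvC)]
        · obtain ⟨i, hui⟩ := hInA u (hAI u huA) huA
          left; rw [hblock_mem i u (Or.inr hui), hbv]; exact i.isLt
    · by_cases hvA : v ∈ A
      · obtain ⟨i, hvis⟩ := hInA v hvI hvA
        have hbv : block v = i := hblock_mem i v (Or.inr hvis)
        obtain ⟨j, hji, hu⟩ := hN3 i v (Or.inr hvis) u huv hne
        have hbu : block u = j := hblock_mem j u hu
        rcases eq_or_lt_of_le hji with rfl | hlt
        · right
          refine ⟨by rw [hbu, hbv], ?_⟩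
          by_cases hssv : special v
          · have hsv : sub v = 0 := hsub_spec v hssv
            have hsu : sub u = 0 := by
              rcases hu with h | h
              · exact hsub_notA u (hCnA u (hCsC j h))
              · obtain ⟨i', hvis', y, hy, hvy, hvyne⟩ := hssv
                have hii : i' = j := by
                  by_contra hne'
                  exact Set.disjoint_left.1 (hIsD i' j hne') hvis' hvis
                subst hii
                have hπuy : π u y := htrans huv hvy
                have huy : u ≠ y := by
                  rintro rfl
                  have h1 : u ∈ C := hCsC i' hy
                  rcases hpart u with ⟨_, h2⟩ | ⟨_, h2⟩
                  · exact h2 (hAI u (hIsA i' u h))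
                  · exact h2 h1
                exact hsub_spec u ⟨i', h, y, hy, hπuy, huy⟩
            omega
          · have h1 := hsub_nonspec_A v hvA hssv
            have h2 := hsub_le u
            omega
        · left; rw [hbu, hbv]; exact hlt
      · have hbv : block v = k + 1 + (n - deg v) := hblock_InotA v hvI hvA
        rcases hpart u with ⟨huC, huI⟩ | ⟨huI, huC⟩
        · by_cases huCs : ∃ i, u ∈ Cs i
          · obtain ⟨i, h⟩ := huCs
            left; rw [hblock_mem i u (Or.inl h), hbv]
            have := i.isLt; omega
          · push_neg at huCs
            left; rw [hblock_CnotCs u huC huCs, hbv]; omega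
        · by_cases huA : u ∈ A
          · obtain ⟨i, h⟩ := hInA u huI huA
            left; rw [hblock_mem i u (Or.inr h), hbv]
            have := i.isLt; omega
          · have hbu : block u = k + 1 + (n - deg u) := hblock_InotA u huI huA
            have hdvu : deg v ≤ deg u := by
              have h1 : u ∉ {u | u ∈ I ∧ ∃ w, (w ∈ C ∨ deg u < deg w) ∧ π u w ∧ u ≠ w} := by
                rw [hA] at huA; exact huA
              by_contra h3
              rw [not_le] at h3
              exact h1 ⟨huI, v, Or.inr h3, huv, hne⟩
            rcases Nat.lt_or_ge (deg v) (deg u) with h | h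
            · left; rw [hbu, hbv]
              have := hdeg_le_n u; have := hdeg_le_n v; omega
            · have hdeq : deg u = deg v := by omega
              right
              refine ⟨by rw [hbu, hbv, hdeq], ?_⟩
              rw [hsub_notA u huA, hsub_notA v hvA]
  -- the MCS property at key level
  have hMkey : ∀ u v : V, key u ≤ key v →
      (univ.filter fun z => key z < key u ∧ G.Adj z v).card ≤
      (univ.filter fun z => key z < key u ∧ G.Adj z u).card := by
    intro u v hkle
    set BC : Finset V := univ.filter fun z => key z < key u ∧ z ∈ C with hBC
    set FBu : Finset V := univ.filter fun z => key z < key u ∧ G.Adj z u with hFBu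
    set FBv : Finset V := univ.filter fun z => key z < key u ∧ G.Adj z v with hFBv
    set FBIu : Finset V := univ.filter fun z => (key z < key u ∧ G.Adj z u) ∧ z ∈ I with hFBIu
    set FBIv : Finset V := univ.filter fun z => (key z < key u ∧ G.Adj z v) ∧ z ∈ I with hFBIv
    have hsplitv : FBv ⊆ BC ∪ FBIv := by
      intro z hz
      simp only [hFBv, hBC, hFBIv, mem_filter, mem_univ, true_and, mem_union] at hz ⊢
      rcases hpart z with ⟨h1, _⟩ | ⟨h1, _⟩
      · exact Or.inl ⟨hz.1, h1⟩
      · exact Or.inr ⟨hz, h1⟩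
    have hdisj : Disjoint BC FBIu := by
      rw [Finset.disjoint_left]
      intro z hz1 hz2
      simp only [hBC, hFBIu, mem_filter] at hz1 hz2
      rcases hpart z with ⟨_, h2⟩ | ⟨_, h2⟩
      · exact h2 hz2.2.2
      · exact h2 hz1.2.2
    have hFBIu_sub : FBIu ⊆ FBu := by
      intro z hz
      simp only [hFBIu, hFBu, mem_filter] at hz ⊢
      exact ⟨hz.1, hz.2.1⟩
    have conclude : BC ⊆ FBu → FBIv ⊆ FBIu → FBv.card ≤ FBu.card := by
      intro hBCsub hFBI
      have h1 : FBv.card ≤ (BC ∪ FBIv).card := card_le_card hsplitv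
      have h1' : (BC ∪ FBIv).card ≤ BC.card + FBIv.card := card_union_le _ _
      have h2 : FBIv.card ≤ FBIu.card := card_le_card hFBI
      have h3 : (BC ∪ FBIu).card = BC.card + FBIu.card := card_union_of_disjoint hdisj
      have h4 : (BC ∪ FBIu) ⊆ FBu := union_subset hBCsub hFBIu_sub
      have h5 := card_le_card h4
      omega
    -- analysis of a member of FBIv, assuming block u ≤ k
    have hzAnal : ∀ z, z ∈ FBIv → block u ≤ k →
        ∃ (j l : Fin k), z ∈ Is j ∧ v ∈ Cs l ∧ (l : ℕ) ≤ (j : ℕ) ∧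
          (j : ℕ) ≤ block u ∧ block u ≤ (l : ℕ) ∧ key z < key u := by
      intro z hz hbk
      simp only [hFBIv, mem_filter, mem_univ, true_and] at hz
      obtain ⟨⟨hzk, hzadj⟩, hzI⟩ := hz
      have hblez : block z ≤ block u := hkey_block_le (le_of_lt hzk)
      have hzA : z ∈ A := by
        by_contra hzA
        rw [hblock_InotA z hzI hzA] at hblez
        omega
      obtain ⟨j, hzis⟩ := hInA z hzI hzA
      have hbz : block z = j := hblock_mem j z (Or.inr hzis)
      have hvnb : v ∈ G.neighborSet z := hzadj
      rw [hNbr j z hzis] at hvnb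
      simp only [Set.mem_iUnion, exists_prop] at hvnb
      obtain ⟨l, hlj, hvcs⟩ := hvnb
      have hbv : block v = l := hblock_mem l v (Or.inl hvcs)
      have hbuv : block u ≤ block v := hkey_block_le hkle
      have hlj' : (l : ℕ) ≤ (j : ℕ) := hlj
      exact ⟨j, l, hzis, hvcs, hlj', by omega, by omega, hzk⟩
    rcases hpart u with ⟨huC, huI⟩ | ⟨huI, huC⟩
    · -- u ∈ C
      have hBCsub : BC ⊆ FBu := by
        intro z hz
        simp only [hBC, hFBu, mem_filter, mem_univ, true_and] at hz ⊢
        refine ⟨hz.1, hC hz.2 huC ?_⟩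
        rintro rfl
        exact lt_irrefl _ hz.1
      apply conclude hBCsub
      by_cases huCs : ∃ i, u ∈ Cs i
      · obtain ⟨i, hucs⟩ := huCs
        have hbu : block u = i := hblock_mem i u (Or.inl hucs)
        intro z hz
        obtain ⟨j, l, hzis, hvcs, hlj, hjle, hble, hzk⟩ :=
          hzAnal z hz (by rw [hbu]; exact le_of_lt i.isLt)
        rw [hbu] at hjle hble
        have hji : j = i := Fin.ext (by omega)
        subst hji
        have hadjzu : G.Adj z u := by
          have h2 : u ∈ G.neighborSet z := by
            rw [hNbr j z hzis]
            exact Set.mem_iUnion.2 ⟨j, Set.mem_iUnion.2 ⟨le_refl j, hucs⟩⟩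
          exact h2
        simp only [hFBIv, hFBIu, mem_filter, mem_univ, true_and] at hz ⊢
        exact ⟨⟨hz.1.1, hadjzu⟩, hz.2⟩
      · push_neg at huCs
        have hbu : block u = k := hblock_CnotCs u huC huCs
        intro z hz
        exfalso
        obtain ⟨j, l, hzis, hvcs, hlj, hjle, hble, hzk⟩ := hzAnal z hz (le_of_eq hbu)
        have := j.isLt
        rw [hbu] at hble
        omega
    · -- u ∈ I
      by_cases huA : u ∈ A
      · obtain ⟨i, huis⟩ := hInA u huI huA
        have hbu : block u = i := hblock_mem i u (Or.inr huis)
        have hNu := hNbr i u huis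
        have hBCsub : BC ⊆ FBu := by
          intro z hz
          simp only [hBC, hFBu, mem_filter, mem_univ, true_and] at hz ⊢
          refine ⟨hz.1, ?_⟩
          have hblez : block z ≤ block u := hkey_block_le (le_of_lt hz.1)
          by_cases hzCs : ∃ l, z ∈ Cs l
          · obtain ⟨l, hzcs⟩ := hzCs
            have hbz : block z = l := hblock_mem l z (Or.inl hzcs)
            have hli : l ≤ i := by
              rw [Fin.le_def]
              rw [hbu] at hblez
              omega
            have h2 : z ∈ G.neighborSet u := by
              rw [hNu]
              exact Set.mem_iUnion.2 ⟨l, Set.mem_iUnion.2 ⟨hli, hzcs⟩⟩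
            exact (G.adj_symm h2)
          · push_neg at hzCs
            exfalso
            have h3 := hblock_CnotCs z hz.2 hzCs
            have := i.isLt
            rw [hbu] at hblez
            omega
        apply conclude hBCsub
        intro z hz
        exfalso
        obtain ⟨j, l, hzis, hvcs, hlj, hjle, hble, hzk⟩ :=
          hzAnal z hz (by rw [hbu]; exact le_of_lt i.isLt)
        rw [hbu] at hjle hble
        have hji : j = i := Fin.ext (by omega)
        have hli : l = i := Fin.ext (by omega)
        rw [hji] at hzis
        rw [hli] at hvcs
        have hsv : sub v = 0 := hsub_notA v (hCnA v (hCsC i hvcs))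
        have hbv : block v = i := hblock_mem i v (Or.inl hvcs)
        by_cases hsu1 : sub u = 1
        · have hkvu : key v < key u := hkey_sub (by rw [hbv, hbu]) (by omega)
          omega
        · have hsu : sub u = 0 := by
            have := hsub_le u
            omega
          have hspecu : special u := by
            by_contra h'
            rw [hsub_nonspec_A u huA h'] at hsu
            omega
          have hbz : block z = i := hblock_mem i z (Or.inr hzis)
          rcases hbs hzk with h | ⟨h1, h2⟩
          · rw [hbz, hbu] at h
            omega
          · rcases h2 with h2 | ⟨h2, h3⟩
            · rw [hsu] at h2
              omega
            · have hzA : z ∈ A := hIsA i z hzis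
              have hspecz : special z := by
                by_contra h'
                rw [hsub_nonspec_A z hzA h'] at h2
                omega
              obtain ⟨i1, hzis1, hy1⟩ := hspecz
              obtain ⟨i2, huis2, hy2⟩ := hspecu
              have e1 : i1 = i := by
                by_contra hne'
                exact Set.disjoint_left.1 (hIsD i1 i hne') hzis1 hzis
              have e2 : i2 = i := by
                by_contra hne'
                exact Set.disjoint_left.1 (hIsD i2 i hne') huis2 huis
              rw [e1] at hzis1 hy1
              rw [e2] at huis2 hy2
              have hzu : z = u := hN4 i z hzis1 u huis2 hy1 hy2
              rw [hzu] at h3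
              omega
      · -- u ∈ I \ A
        have hbu : block u = k + 1 + (n - deg u) := hblock_InotA u huI huA
        have hblock_C_le : ∀ z ∈ C, block z ≤ k := by
          intro z hzC
          by_cases hzCs : ∃ l, z ∈ Cs l
          · obtain ⟨l, h3⟩ := hzCs
            rw [hblock_mem l z (Or.inl h3)]
            exact le_of_lt l.isLt
          · push_neg at hzCs
            rw [hblock_CnotCs z hzC hzCs]
        have hFBu_eq : FBu = G.neighborFinset u := by
          ext z
          simp only [hFBu, mem_filter, mem_univ, true_and, SimpleGraph.mem_neighborFinset]
          constructor
          · rintro ⟨_, h2⟩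
            exact h2.symm
          · intro h2
            refine ⟨?_, h2.symm⟩
            have hzC : z ∈ C := adj_mem_C hpart hI huI h2
            apply hkey_blt
            have := hblock_C_le z hzC
            omega
        have hbuv : block u ≤ block v := hkey_block_le hkle
        have hvI2 : v ∈ I ∧ v ∉ A := by
          rcases hpart v with ⟨hvC, _⟩ | ⟨hvI, _⟩
          · exfalso
            have := hblock_C_le v hvC
            omega
          · refine ⟨hvI, fun hvA => ?_⟩
            obtain ⟨l, h3⟩ := hInA v hvI hvA
            rw [hblock_mem l v (Or.inr h3), hbu] at hbuv
            have := l.isLt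
            omega
        have hbv : block v = k + 1 + (n - deg v) := hblock_InotA v hvI2.1 hvI2.2
        have hdvu : deg v ≤ deg u := by
          rw [hbu, hbv] at hbuv
          have := hdeg_le_n u
          have := hdeg_le_n v
          omega
        have hFBv_sub : FBv ⊆ G.neighborFinset v := by
          intro z hz
          simp only [hFBv, mem_filter, mem_univ, true_and] at hz
          rw [SimpleGraph.mem_neighborFinset]
          exact hz.2.symm
        have h5 := card_le_card hFBv_sub
        rw [hFBu_eq]
        have e1 : deg v = (G.neighborFinset v).card := rfl
        have e2 : deg u = (G.neighborFinset u).card := rfl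
        omega
  -- assemble
  letI : LinearOrder V := LinearOrder.lift' key hkey_inj
  have hlt_key : ∀ z w : V, z < w ↔ key z < key w := fun _ _ => Iff.rfl
  let σo : Fin (Fintype.card V) ≃o V := monoEquivOfFin V rfl
  have hpos_iff : ∀ z w : V, σo.symm z < σo.symm w ↔ key z < key w := by
    intro z w
    rw [σo.symm.lt_iff_lt]
    exact hlt_key z w
  refine ⟨σo.toEquiv, ?_, ?_⟩
  · intro p q hpq
    rw [mcsLt, not_lt, labelF_card, labelF_card]
    have hkle : key (σo.toEquiv p) ≤ key (σo.toEquiv q) := by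
      have h1 : σo p ≤ σo q := σo.le_iff_le.2 hpq
      exact h1
    have hvis : ∀ z w : V, (σo.toEquiv.symm z < σo.toEquiv.symm w) ↔ key z < key w :=
      hpos_iff
    have hveq : ∀ w : V, (univ.filter fun z => σo.toEquiv.symm z < p ∧ G.Adj z w)
        = univ.filter fun z => key z < key (σo.toEquiv p) ∧ G.Adj z w := by
      intro w
      apply filter_congr
      intro z _
      have h3 : (σo.toEquiv.symm z < p) ↔ key z < key (σo.toEquiv p) := by
        have h4 := hvis z (σo.toEquiv p)
        rwa [show σo.toEquiv.symm (σo.toEquiv p) = p by simp] at h4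
      rw [h3]
    rw [vcnt, vcnt, hveq, hveq]
    exact hMkey (σo.toEquiv p) (σo.toEquiv q) hkle
  · intro u v huv hne
    have h1 : key u < key v := hE u v huv hne
    exact (hpos_iff u v).2 h1

end Aux

/-- There is an MCS ordering of a split graph `G` extending `π` iff `(π, A)` fulfills
the nested property, where `A = {u ∈ I : ∃ v with (v ∈ C or |N(u)| < |N(v)|) and
u ≺_π v}`. -/
theorem mcs_extension_iff_nested (G : SimpleGraph V) [Fintype V] [DecidableRel G.Adj]
    (C I : Set V) (hpart : ∀ v : V, (v ∈ C ∧ v ∉ I) ∨ (v ∈ I ∧ v ∉ C))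
    (hC : G.IsClique C) (hI : ∀ u ∈ I, ∀ v ∈ I, ¬ G.Adj u v)
    (π : V → V → Prop) (hπ : IsPartialOrder V π)
    (A : Set V)
    (hA : A = {u | u ∈ I ∧ ∃ v : V,
      (v ∈ C ∨ (G.neighborFinset u).card < (G.neighborFinset v).card) ∧
      π u v ∧ u ≠ v}) :
    (∃ σ : Fin (Fintype.card V) ≃ V, IsSearchOrdering mcsLt G σ ∧
        ∀ u v : V, π u v → u ≠ v → σ.symm u < σ.symm v) ↔
      NestedProperty G C I π A := by
  constructor
  · rintro ⟨σ, hs, hext⟩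
    exact forward_nested G C I hpart hC hI π hπ A hA σ hs hext
  · intro hN
    exact backward_exists G C I hpart hC hI π hπ A hA hN
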